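/- arXiv:1401.3146 — 7 statements merged into one kernel-verified Lean document; each statement's English description precedes it below -/
import Mathlib

section
/- Let κ be the 3×4 stochastic matrix with rows (1/2, 0, 0, 1/2), (0, 1/2, 0, 1/2), (0, 0, 1/2, 1/2), and μ the 3×3 stochastic matrix with rows (1/2, 1/2, 0), (1/2, 0, 1/2), (0, 1/2, 1/2). Then there is no row-stochastic 4×3 matrix λ with μ = κλ. -/
def IsStochastic {X Y : Type*} [Fintype Y] (κ : Matrix X Y ℝ) : Prop :=
  (∀ x y, 0 ≤ κ x y) ∧ ∀ x, ∑ y, κ x y = 1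

def zonotope {X Y : Type*} [Fintype Y] (κ : Matrix X Y ℝ) : Set (X → ℝ) :=
  {v | ∃ a : Y → ℝ, (∀ y, a y ∈ Set.Icc (0:ℝ) 1) ∧ v = κ.mulVec a}

noncomputable def κex : Matrix (Fin 3) (Fin 4) ℝ :=
  !![1/2, 0, 0, 1/2; 0, 1/2, 0, 1/2; 0, 0, 1/2, 1/2]

noncomputable def μex : Matrix (Fin 3) (Fin 3) ℝ :=
  !![1/2, 1/2, 0; 1/2, 0, 1/2; 0, 1/2, 1/2]

theorem no_stochastic_factor :
    ¬ ∃ lam : Matrix (Fin 4) (Fin 3) ℝ, IsStochastic lam ∧ μex = κex * lam := by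
  rintro ⟨lam, ⟨hnn, hsum⟩, heq⟩
  have h0 := congrFun (congrFun heq 0) 2
  have h1 := congrFun (congrFun heq 1) 1
  have h2 := congrFun (congrFun heq 2) 0
  simp [μex, κex, Matrix.mul_apply, Fin.sum_univ_four] at h0 h1 h2
  have hs := hsum 3
  rw [Fin.sum_univ_three] at hs
  have n02 := hnn 0 2
  have n11 := hnn 1 1
  have n20 := hnn 2 0
  linarith
end

section
/- Let κ be the 3×4 stochastic matrix with rows (1/2, 0, 0, 1/2), (0, 1/2, 0, 1/2), (0, 0, 1/2, 1/2), and μ the 3×3 stochastic matrix with rows (1/2, 1/2, 0), (1/2, 0, 1/2), (0, 1/2, 1/2). Then Z_μ ⊆ Z_κ, i.e., for every a ∈ [0,1]^3 there exists b ∈ [0,1]^4 with μa = κb. -/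
theorem zonotope_subset_example : zonotope μex ⊆ zonotope κex := by
  rintro v ⟨a, ha, rfl⟩
  obtain ⟨h00, h01⟩ := ha 0
  obtain ⟨h10, h11⟩ := ha 1
  obtain ⟨h20, h21⟩ := ha 2
  set t : ℝ := max 0 (max (a 0 + a 1 - 1) (max (a 0 + a 2 - 1) (a 1 + a 2 - 1))) with ht
  have ht0 : 0 ≤ t := le_max_left _ _
  have ht1 : t ≤ 1 := by
    apply max_le (by norm_num)
    apply max_le (by linarith)
    exact max_le (by linarith) (by linarith)
  have h01t : a 0 + a 1 - 1 ≤ t := le_max_of_le_right (le_max_left _ _)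
  have h02t : a 0 + a 2 - 1 ≤ t := le_max_of_le_right (le_max_of_le_right (le_max_left _ _))
  have h12t : a 1 + a 2 - 1 ≤ t := le_max_of_le_right (le_max_of_le_right (le_max_right _ _))
  have ht01 : t ≤ a 0 + a 1 := by
    apply max_le (by linarith)
    apply max_le (by linarith)
    exact max_le (by linarith) (by linarith)
  have ht02 : t ≤ a 0 + a 2 := by
    apply max_le (by linarith)
    apply max_le (by linarith)
    exact max_le (by linarith) (by linarith)
  have ht12 : t ≤ a 1 + a 2 := by
    apply max_le (by linarith)
    apply max_le (by linarith)
    exact max_le (by linarith) (by linarith)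
  refine ⟨![a 0 + a 1 - t, a 0 + a 2 - t, a 1 + a 2 - t, t], ?_, ?_⟩
  · intro y
    fin_cases y <;> constructor <;> simp <;> linarith
  · funext x
    fin_cases x <;>
      simp [μex, κex, Matrix.mulVec, dotProduct, Fin.sum_univ_succ,
        Matrix.vecHead, Matrix.vecTail] <;> ring
end

section
/- Together, the previous two facts show that for |X| = 3 the zonotope order is strictly weaker than the majorization order: there exist stochastic matrices κ ∈ K(X;{1,2,3,4}) and μ ∈ K(X;{1,2,3}) with Z_μ ⊆ Z_κ but no stochastic λ with μ = κλ. -/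
theorem zonotope_order_strictly_weaker :
    ∃ (κ : Matrix (Fin 3) (Fin 4) ℝ) (μ : Matrix (Fin 3) (Fin 3) ℝ),
      IsStochastic κ ∧ IsStochastic μ ∧ zonotope μ ⊆ zonotope κ ∧
      ¬ ∃ lam : Matrix (Fin 4) (Fin 3) ℝ, IsStochastic lam ∧ μ = κ * lam := by
  refine ⟨!![1/2,0,0,1/2; 0,1/2,0,1/2; 0,0,1/2,1/2],
         !![1/2,1/2,0; 1/2,0,1/2; 0,1/2,1/2], ?_, ?_, ?_, ?_⟩
  · constructor
    · intro x y; fin_cases x <;> fin_cases y <;> norm_num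
    · intro x; fin_cases x <;> norm_num [Fin.sum_univ_succ]
  · constructor
    · intro x y; fin_cases x <;> fin_cases y <;> norm_num
    · intro x; fin_cases x <;> norm_num [Fin.sum_univ_succ]
  · rintro v ⟨a, ha, rfl⟩
    have h0 := ha 0; have h1 := ha 1; have h2 := ha 2
    simp only [Set.mem_Icc] at h0 h1 h2
    set M : ℝ := max 0 (max (a 0 + a 1 - 1) (max (a 0 + a 2 - 1) (a 1 + a 2 - 1))) with hM
    have hM0 : (0:ℝ) ≤ M := le_max_left _ _
    have hMa : a 0 + a 1 - 1 ≤ M := le_max_of_le_right (le_max_left _ _)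
    have hMb : a 0 + a 2 - 1 ≤ M := le_max_of_le_right (le_max_of_le_right (le_max_left _ _))
    have hMc : a 1 + a 2 - 1 ≤ M := le_max_of_le_right (le_max_of_le_right (le_max_right _ _))
    have hU1 : M ≤ a 0 + a 1 := by
      apply max_le (by linarith) (max_le (by linarith) (max_le (by linarith) (by linarith)))
    have hU2 : M ≤ a 0 + a 2 := by
      apply max_le (by linarith) (max_le (by linarith) (max_le (by linarith) (by linarith)))
    have hU3 : M ≤ a 1 + a 2 := by
      apply max_le (by linarith) (max_le (by linarith) (max_le (by linarith) (by linarith)))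
    have hU4 : M ≤ 1 := by
      apply max_le (by linarith) (max_le (by linarith) (max_le (by linarith) (by linarith)))
    refine ⟨![a 0 + a 1 - M, a 0 + a 2 - M, a 1 + a 2 - M, M], ?_, ?_⟩
    · intro y; fin_cases y <;> simp [Set.mem_Icc] <;> constructor <;> linarith
    · funext x
      fin_cases x <;>
        simp [Matrix.mulVec, dotProduct, Fin.sum_univ_succ] <;> ring
  · rintro ⟨lam, ⟨hpos, hsum⟩, heq⟩
    have e20 := congrFun (congrFun heq 2) 0
    have e11 := congrFun (congrFun heq 1) 1
    have e02 := congrFun (congrFun heq 0) 2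
    simp [Matrix.mul_apply, Fin.sum_univ_succ] at e20 e11 e02
    have p30 := hpos (Fin.succ 2) 0; have p31 := hpos (Fin.succ 2) 1; have p32 := hpos (Fin.succ 2) 2
    have p20 := hpos 2 0; have p11 := hpos 1 1; have p02 := hpos 0 2
    have s3 := hsum (Fin.succ 2)
    simp [Fin.sum_univ_succ] at s3
    linarith
end

section
/- Suppose |X| = 2. A set Z ⊆ [0,1]^X equals Z_κ for some row-stochastic matrix κ with domain X if and only if Z is a convex polytope (zonotope) containing 0_X and 1_X that is symmetric under v ↦ 1_X − v. -/
/-- A zonotope: the set of `[0,1]`-combinations of finitely many generating vectors. -/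
def IsZonotope {X : Type*} (Z : Set (X → ℝ)) : Prop :=
  ∃ (n : ℕ) (v : Fin n → X → ℝ),
    Z = {w | ∃ a : Fin n → ℝ, (∀ i, a i ∈ Set.Icc (0:ℝ) 1) ∧ w = ∑ i, a i • v i}

theorem binary_zonotope_characterization (Z : Set (Fin 2 → ℝ)) :
    (∃ (n : ℕ) (κ : Matrix (Fin 2) (Fin n) ℝ), IsStochastic κ ∧ Z = zonotope κ) ↔
      (IsZonotope Z ∧ (∀ v ∈ Z, ∀ x, v x ∈ Set.Icc (0:ℝ) 1) ∧
        (fun _ => (0:ℝ)) ∈ Z ∧ (fun _ => (1:ℝ)) ∈ Z ∧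
        ∀ v ∈ Z, (fun x => 1 - v x) ∈ Z) := by
  constructor
  · rintro ⟨n, κ, ⟨hpos, hsum⟩, rfl⟩
    have hmv : ∀ (a : Fin n → ℝ) (x : Fin 2), κ.mulVec a x = ∑ i, κ x i * a i := by
      intro a x; rfl
    refine ⟨⟨n, fun i x => κ x i, ?_⟩, ?_, ?_, ?_, ?_⟩
    · ext w
      simp only [zonotope, Set.mem_setOf_eq]
      constructor
      · rintro ⟨a, ha, rfl⟩
        refine ⟨a, ha, ?_⟩
        funext x
        simp [hmv, Finset.sum_apply, mul_comm]
      · rintro ⟨a, ha, rfl⟩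
        refine ⟨a, ha, ?_⟩
        funext x
        simp [hmv, Finset.sum_apply, mul_comm]
    · rintro v ⟨a, ha, rfl⟩ x
      rw [Set.mem_Icc, hmv]
      constructor
      · exact Finset.sum_nonneg fun y _ => mul_nonneg (hpos x y) (ha y).1
      · calc ∑ y, κ x y * a y ≤ ∑ y, κ x y := by
              refine Finset.sum_le_sum fun y _ => ?_
              nlinarith [(ha y).2, hpos x y]
          _ = 1 := hsum x
    · exact ⟨0, fun y => by simp, by funext x; simp [hmv]⟩
    · exact ⟨1, fun y => by simp, by funext x; simp [hmv, hsum x]⟩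
    · rintro v ⟨a, ha, rfl⟩
      refine ⟨fun y => 1 - a y, fun y => ?_, ?_⟩
      · have := ha y
        simp only [Set.mem_Icc] at this ⊢
        constructor <;> linarith [this.1, this.2]
      funext x
      simp only [hmv, mul_sub, mul_one, Finset.sum_sub_distrib, hsum x]
  · rintro ⟨⟨n, v, rfl⟩, hbox, h0, h1, hsym⟩
    have hgen : ∀ i, v i ∈ {w | ∃ a : Fin n → ℝ, (∀ j, a j ∈ Set.Icc (0:ℝ) 1) ∧
        w = ∑ j, a j • v j} := by
      intro i
      refine ⟨fun j => if j = i then 1 else 0, fun j => by dsimp only; split <;> simp, ?_⟩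
      simp [ite_smul]
    have hgen01 : ∀ i x, v i x ∈ Set.Icc (0:ℝ) 1 := fun i x => hbox _ (hgen i) x
    have hsum1 : ∀ x, ∑ i, v i x = 1 := by
      intro x
      have hsle : ∑ i, v i x ≤ 1 := by
        have := hbox _ ⟨1, fun j => by simp, rfl⟩ x
        simpa [Finset.sum_apply] using this.2
      obtain ⟨a, ha, h1e⟩ := h1
      have h1x : (1:ℝ) = ∑ i, a i * v i x := by
        have := congrFun h1e x
        simpa [Finset.sum_apply] using this
      have hge : (1:ℝ) ≤ ∑ i, v i x := by
        rw [h1x]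
        refine Finset.sum_le_sum fun i _ => ?_
        nlinarith [(ha i).2, (hgen01 i x).1]
      linarith
    refine ⟨n, fun x i => v i x, ⟨fun x i => (hgen01 i x).1, fun x => hsum1 x⟩, ?_⟩
    ext w
    simp only [zonotope, Set.mem_setOf_eq]
    constructor
    · rintro ⟨a, ha, rfl⟩
      refine ⟨a, ha, ?_⟩
      funext x
      simp [Matrix.mulVec, dotProduct, Finset.sum_apply, mul_comm]
    · rintro ⟨a, ha, rfl⟩
      refine ⟨a, ha, ?_⟩
      funext x
      simp [Matrix.mulVec, dotProduct, Finset.sum_apply, mul_comm]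
end

section
/- For |X| = 2, the zonotope order coincides with the majorization order: for row-stochastic matrices κ ∈ K(X;Y) and μ ∈ K(X;Z), one has Z_μ ⊆ Z_κ if and only if there exists a row-stochastic matrix λ with μ = κλ. -/
namespace BlackwellAux

lemma list_sum_map_add {α : Type*} (L : List α) (f g : α → ℝ) :
    (L.map fun x => f x + g x).sum = (L.map f).sum + (L.map g).sum := by
  induction L with
  | nil => simp
  | cons h t ih => simp [ih]; ring

lemma list_sum_map_mul {α : Type*} (L : List α) (c : ℝ) (f : α → ℝ) :
    (L.map fun x => c * f x).sum = c * (L.map f).sum := by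
  induction L with
  | nil => simp
  | cons h t ih => simp [ih]; ring

lemma list_continuous (L : List (ℝ × ℝ)) :
    Continuous fun t : ℝ => (L.map fun p => p.1 * max (t - p.2) 0).sum := by
  induction L with
  | nil => simpa using continuous_const
  | cons h t ih =>
    simp only [List.map_cons, List.sum_cons]
    exact (continuous_const.mul ((continuous_id.sub continuous_const).max continuous_const)).add ih

lemma list_swap {α β : Type*} (L : List α) (s : Finset β) (f : α → β → ℝ) :
    ∑ b ∈ s, (L.map fun a => f a b).sum = (L.map fun a => ∑ b ∈ s, f a b).sum := by
  induction L with
  | nil => simp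
  | cons h t ih => simp [Finset.sum_add_distrib, ih]

lemma max_add_decomp (x y : ℝ) : max x y = x + max (y - x) 0 := by
  rcases le_total x y with h | h
  · rw [max_eq_right h, max_eq_left (by linarith)]; ring
  · rw [max_eq_left h, max_eq_right (by linarith)]; ring

lemma hinge_decomp {ι : Type*} (a b : ι → ℝ) (I : Finset ι) (hI : I.Nonempty) :
    ∃ (c₀ A : ℝ) (L : List (ℝ × ℝ)),
      (∃ i ∈ I, A = a i) ∧ (∀ p ∈ L, 0 ≤ p.1) ∧
      ∀ t : ℝ, I.sup' hI (fun i => a i * t + b i)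
        = c₀ + A * t + (L.map fun p => p.1 * max (t - p.2) 0).sum := by
  classical
  induction I using Finset.strongInduction with
  | _ I ih => ?_
  obtain ⟨i₁, hi₁I, hmin⟩ := I.exists_min_image a hI
  set J := I.erase i₁ with hJdef
  by_cases hJ : J.Nonempty
  · have hJI : J ⊂ I := Finset.erase_ssubset hi₁I
    obtain ⟨c₀, A, L, ⟨j, hjJ, hAj⟩, hLpos, hrep⟩ := ih J hJI hJ
    have hAa : a i₁ ≤ A := by rw [hAj]; exact hmin j (Finset.mem_of_mem_erase hjJ)
    have hsplit : ∀ t : ℝ, I.sup' hI (fun i => a i * t + b i)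
        = (a i₁ * t + b i₁) ⊔ J.sup' hJ (fun i => a i * t + b i) := by
      intro t
      have hIins : I = insert i₁ J := (Finset.insert_erase hi₁I).symm
      have h2 := Finset.sup'_congr (g := fun i => a i * t + b i) hI hIins (fun x _ => rfl)
      rw [h2]
      exact Finset.sup'_insert (H := hJ) (f := fun i => a i * t + b i) (b := i₁)
    set H : ℝ → ℝ := fun t =>
      (c₀ + A * t + (L.map fun p => p.1 * max (t - p.2) 0).sum) - (a i₁ * t + b i₁) with hHdef
    have hmono : Monotone H := by
      intro t t' htt'
      have h2 : (L.map fun p => p.1 * max (t - p.2) 0).sum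
          ≤ (L.map fun p => p.1 * max (t' - p.2) 0).sum := by
        refine List.sum_le_sum fun p hp => ?_
        exact mul_le_mul_of_nonneg_left (max_le_max (by linarith) le_rfl) (hLpos p hp)
      have h3 : (A - a i₁) * t ≤ (A - a i₁) * t' :=
        mul_le_mul_of_nonneg_left htt' (by linarith)
      simp only [hHdef]
      nlinarith
    have hcont : Continuous H := by
      apply Continuous.sub
      · exact (continuous_const.add (continuous_const.mul continuous_id)).add (list_continuous L)
      · exact (continuous_const.mul continuous_id).add continuous_const
    by_cases hnonneg : ∀ t, 0 ≤ H t
    · refine ⟨c₀, A, L, ⟨j, Finset.erase_subset _ _ hjJ, hAj⟩, hLpos, fun t => ?_⟩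
      rw [hsplit t, hrep t]
      refine sup_eq_right.2 ?_
      have := hnonneg t
      simp only [hHdef] at this
      linarith [hrep t]
    · by_cases hnonpos : ∀ t, H t ≤ 0
      · refine ⟨b i₁, a i₁, [], ⟨i₁, hi₁I, rfl⟩, by simp, fun t => ?_⟩
        rw [hsplit t, hrep t]
        have h1 := hnonpos t
        simp only [hHdef] at h1
        rw [sup_eq_left.2 (by linarith)]
        simp; ring
      · push_neg at hnonneg hnonpos
        obtain ⟨t₀, ht₀⟩ := hnonneg
        obtain ⟨t₁, ht₁⟩ := hnonpos
        have ht01 : t₀ ≤ t₁ := by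
          by_contra hc
          have := hmono (le_of_not_ge hc)
          linarith
        have h0mem : (0:ℝ) ∈ Set.Icc (H t₀) (H t₁) := ⟨le_of_lt ht₀, le_of_lt ht₁⟩
        obtain ⟨τ, -, hτ⟩ := intermediate_value_Icc ht01 hcont.continuousOn h0mem
        refine ⟨b i₁, a i₁, (A - a i₁, τ) :: L.map (fun p => (p.1, max p.2 τ)),
          ⟨i₁, hi₁I, rfl⟩, ?_, fun t => ?_⟩
        · intro p hp
          rcases List.mem_cons.1 hp with h | h
          · rw [h]; simpa using hAa
          · obtain ⟨q, hq, rfl⟩ := List.mem_map.1 h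
            exact hLpos q hq
        · rw [hsplit t, hrep t, max_add_decomp]
          have hHt : (c₀ + A * t + (L.map fun p => p.1 * max (t - p.2) 0).sum)
              - (a i₁ * t + b i₁) = H t := rfl
          rw [hHt]
          simp only [List.map_cons, List.sum_cons, List.map_map]
          have hcomp : ((fun p : ℝ × ℝ => p.1 * max (t - p.2) 0) ∘
              (fun p : ℝ × ℝ => (p.1, max p.2 τ)))
              = fun p : ℝ × ℝ => p.1 * max (t - max p.2 τ) 0 := rfl
          rw [hcomp]
          rcases le_total t τ with htτ | hτt
          · have hHt0 : H t ≤ 0 := le_trans (hmono htτ) (le_of_eq hτ)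
            rw [max_eq_right hHt0]
            have h1 : max (t - τ) 0 = 0 := max_eq_right (by linarith)
            have h2 : (L.map fun p : ℝ × ℝ => p.1 * max (t - max p.2 τ) 0).sum = 0 := by
              refine List.sum_eq_zero fun x hx => ?_
              obtain ⟨p, hp, rfl⟩ := List.mem_map.1 hx
              have : max (t - max p.2 τ) 0 = 0 :=
                max_eq_right (by have := le_max_right p.2 τ; linarith)
              rw [this, mul_zero]
            rw [h1, h2]; ring
          · have hHt0 : 0 ≤ H t := hτ ▸ hmono hτt
            rw [max_eq_left hHt0]
            have hkey : ∀ p ∈ L, (fun p : ℝ × ℝ => p.1 * max (τ - p.2) 0) p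
                + (fun p : ℝ × ℝ => p.1 * max (t - max p.2 τ) 0) p
                = (fun p : ℝ × ℝ => p.1 * max (t - p.2) 0) p := by
              intro p hp
              simp only
              rcases le_total p.2 τ with hθ | hθ
              · rw [max_eq_right hθ, max_eq_left (by linarith), max_eq_left (by linarith),
                  max_eq_left (by linarith)]
                ring
              · rw [max_eq_left hθ, max_eq_right (by linarith)]
                ring
            have hsum : (L.map fun p : ℝ × ℝ => p.1 * max (τ - p.2) 0).sum
                + (L.map fun p : ℝ × ℝ => p.1 * max (t - max p.2 τ) 0).sum
                = (L.map fun p : ℝ × ℝ => p.1 * max (t - p.2) 0).sum := by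
              rw [← list_sum_map_add]
              exact congrArg List.sum (List.map_congr_left hkey)
            have hτ0 : (c₀ + A * τ + (L.map fun p : ℝ × ℝ => p.1 * max (τ - p.2) 0).sum)
                - (a i₁ * τ + b i₁) = 0 := hτ
            have hHtexp : H t = (c₀ + A * t + (L.map fun p : ℝ × ℝ => p.1 * max (t - p.2) 0).sum)
                - (a i₁ * t + b i₁) := rfl
            have hmax : max (t - τ) 0 = t - τ := max_eq_left (by linarith)
            rw [hHtexp, hmax]
            linarith [hsum]
  · have hIsing : I = {i₁} := by
      rcases (Finset.erase_eq_empty_iff I i₁).1 (Finset.not_nonempty_iff_eq_empty.1 hJ) with h | h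
      · exact absurd (h ▸ hI) (by simp)
      · exact h
    subst hIsing
    refine ⟨b i₁, a i₁, [], ⟨i₁, by simp, rfl⟩, by simp, fun t => ?_⟩
    simp [Finset.sup'_singleton]
    ring

end BlackwellAux

open BlackwellAux in
theorem binary_zonotope_order_eq_majorization {Y Z : Type*} [Fintype Y] [Fintype Z]
    (κ : Matrix (Fin 2) Y ℝ) (μ : Matrix (Fin 2) Z ℝ)
    (hκ : IsStochastic κ) (hμ : IsStochastic μ) :
    zonotope μ ⊆ zonotope κ ↔ ∃ lam : Matrix Y Z ℝ, IsStochastic lam ∧ μ = κ * lam := by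
  constructor
  · intro hsub
    classical
    by_contra hno
    -- Z is nonempty
    have hZne : (Finset.univ : Finset Z).Nonempty := by
      by_contra h
      have h2 := hμ.2 0
      rw [Finset.not_nonempty_iff_eq_empty] at h
      rw [h] at h2
      simp at h2
    -- the set of stochastic "matrices" as functions
    set Λ : Set (Y → Z → ℝ) := {l | (∀ y z, 0 ≤ l y z) ∧ ∀ y, ∑ z, l y z = 1} with hΛdef
    -- the linear map l ↦ κ * l
    set F : (Y → Z → ℝ) →ₗ[ℝ] (Fin 2 → Z → ℝ) :=
      { toFun := fun l x z => ∑ y, κ x y * l y z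
        map_add' := by
          intro l l'
          funext x z
          simp [mul_add, Finset.sum_add_distrib]
        map_smul' := by
          intro c l
          funext x z
          simp [Finset.mul_sum]
          ring_nf
          simp [mul_assoc, mul_comm, mul_left_comm] } with hFdef
    -- μ viewed as a function is not in F '' Λ
    have hμnot : (fun x z => μ x z) ∉ F '' Λ := by
      rintro ⟨l, hl, hFl⟩
      refine hno ⟨Matrix.of l, ⟨hl.1, hl.2⟩, ?_⟩
      ext x z
      have := congrFun (congrFun hFl x) z
      rw [Matrix.mul_apply]
      exact this.symm
    -- Λ is convex
    have hΛconvex : Convex ℝ Λ := by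
      intro l hl l' hl' α β hα hβ hab
      constructor
      · intro y z
        simp only [Pi.add_apply, Pi.smul_apply, smul_eq_mul]
        exact add_nonneg (mul_nonneg hα (hl.1 y z)) (mul_nonneg hβ (hl'.1 y z))
      · intro y
        simp only [Pi.add_apply, Pi.smul_apply, smul_eq_mul]
        rw [Finset.sum_add_distrib, ← Finset.mul_sum, ← Finset.mul_sum, hl.2 y, hl'.2 y]
        simpa using hab
    -- Λ is compact
    have hΛcompact : IsCompact Λ := by
      have hK : IsCompact (Set.pi Set.univ fun _ : Y => Set.pi Set.univ fun _ : Z => Set.Icc (0:ℝ) 1) :=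
        isCompact_univ_pi fun _ => isCompact_univ_pi fun _ => isCompact_Icc
      have hsub' : Λ ⊆ Set.pi Set.univ fun _ : Y => Set.pi Set.univ fun _ : Z => Set.Icc (0:ℝ) 1 := by
        rintro l ⟨h1, h2⟩
        intro y _
        intro z _
        refine ⟨h1 y z, ?_⟩
        calc l y z ≤ ∑ z', l y z' :=
              Finset.single_le_sum (fun z' _ => h1 y z') (Finset.mem_univ z)
          _ = 1 := h2 y
      have hclosedΛ : IsClosed Λ := by
        have heq : Λ = (⋂ (y : Y), ⋂ (z : Z), {l : Y → Z → ℝ | 0 ≤ l y z})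
            ∩ ⋂ (y : Y), {l : Y → Z → ℝ | ∑ z, l y z = 1} := by
          ext l
          simp [hΛdef, Set.mem_iInter]
        rw [heq]
        refine IsClosed.inter (isClosed_iInter fun y => isClosed_iInter fun z => ?_)
          (isClosed_iInter fun y => ?_)
        · exact isClosed_le continuous_const ((continuous_apply z).comp (continuous_apply y))
        · exact isClosed_eq (continuous_finset_sum _ fun z _ =>
            (continuous_apply z).comp (continuous_apply y)) continuous_const
      exact hK.of_isClosed_subset hclosedΛ hsub'
    -- separation
    have hFcont : Continuous F := F.continuous_of_finiteDimensional
    have hSc : IsCompact (F '' Λ) := hΛcompact.image hFcont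
    obtain ⟨f, u, hfu, huf⟩ :=
      geometric_hahn_banach_closed_point (hΛconvex.linear_image F) hSc.isClosed hμnot
    -- the embedding maps φ z : (Fin 2 → ℝ) →ₗ (Fin 2 → Z → ℝ)
    set φ : Z → ((Fin 2 → ℝ) →ₗ[ℝ] (Fin 2 → Z → ℝ)) := fun z =>
      { toFun := fun v x z' => if z' = z then v x else 0
        map_add' := by
          intro v w
          funext x z'
          by_cases h : z' = z <;> simp [h]
        map_smul' := by
          intro c v
          funext x z'
          by_cases h : z' = z <;> simp [h] } with hφdef
    set c : Z → Fin 2 → ℝ := fun z x => f (φ z (Pi.single x 1 : Fin 2 → ℝ)) with hcdef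
    set D : Z → (Fin 2 → ℝ) → ℝ := fun z v => v 0 * c z 0 + v 1 * c z 1 with hDdef
    have hsingle : ∀ v : Fin 2 → ℝ, v = v 0 • (Pi.single 0 1 : Fin 2 → ℝ) + v 1 • (Pi.single 1 1 : Fin 2 → ℝ) := by
      intro v
      funext i
      fin_cases i <;> simp [Pi.single_apply]
    have hQ : ∀ (z : Z) (v : Fin 2 → ℝ), f (φ z v) = D z v := by
      intro z v
      conv_lhs => rw [hsingle v]
      rw [map_add, map_smul, map_smul, map_add, map_smul, map_smul]
      simp [hDdef, hcdef, mul_comm]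
    -- decomposition of μ and of F lσ
    have hμdecomp : (fun x z => μ x z) = ∑ z : Z, φ z (fun x => μ x z) := by
      funext x z'
      rw [Finset.sum_apply, Finset.sum_apply]
      simp [hφdef]
    have hfμ : f (fun x z => μ x z) = ∑ z : Z, D z (fun x => μ x z) := by
      rw [hμdecomp, map_sum]
      exact Finset.sum_congr rfl fun z _ => hQ z _
    -- choose argmax σ
    have hex : ∀ y : Y, ∃ z : Z,
        Finset.univ.sup' hZne (fun z' => D z' (fun x => κ x y)) = D z (fun x => κ x y) := by
      intro y
      obtain ⟨z0, _, hz0⟩ := Finset.exists_mem_eq_sup' hZne (fun z' => D z' (fun x => κ x y))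
      exact ⟨z0, hz0⟩
    choose σ hσ using hex
    set lσ : Y → Z → ℝ := fun y z => if z = σ y then 1 else 0 with hlσdef
    have hlσΛ : lσ ∈ Λ := by
      constructor
      · intro y z
        by_cases h : z = σ y <;> simp [hlσdef, h]
      · intro y
        simp [hlσdef]
    have hFlσ : F lσ = ∑ y : Y, φ (σ y) (fun x => κ x y) := by
      funext x z'
      rw [Finset.sum_apply, Finset.sum_apply]
      simp [hFdef, hφdef, hlσdef, mul_ite]
    have hfFlσ : f (F lσ) = ∑ y : Y, Finset.univ.sup' hZne (fun z' => D z' (fun x => κ x y)) := by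
      rw [hFlσ, map_sum]
      exact Finset.sum_congr rfl fun y _ => (hQ (σ y) _).trans (hσ y).symm
    -- the strict separation inequality
    have hstrict : ∑ y : Y, Finset.univ.sup' hZne (fun z' => D z' (fun x => κ x y))
        < ∑ z : Z, D z (fun x => μ x z) := by
      rw [← hfFlσ, ← hfμ]
      exact lt_trans (hfu _ ⟨lσ, hlσΛ, rfl⟩) huf
    -- hinge decomposition of the sup
    obtain ⟨c₀, A, L, -, hLpos, hrep⟩ :=
      hinge_decomp (fun z => c z 0 - c z 1) (fun z => c z 1) Finset.univ hZne
    -- 2D version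
    have h2d : ∀ v : Fin 2 → ℝ, 0 ≤ v 0 → 0 ≤ v 1 →
        Finset.univ.sup' hZne (fun z => D z v)
          = c₀ * (v 0 + v 1) + A * v 0
            + (L.map fun p => p.1 * max (v 0 - p.2 * (v 0 + v 1)) 0).sum := by
      intro v h0 h1
      rcases eq_or_lt_of_le (add_nonneg h0 h1) with hs | hs
      · have hv0 : v 0 = 0 := by linarith
        have hv1 : v 1 = 0 := by linarith
        have hD0 : (fun z : Z => D z v) = fun _ => (0:ℝ) := by
          funext z
          simp [hDdef, hv0, hv1]
        rw [hD0, Finset.sup'_const]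
        have hL0 : (L.map fun p => p.1 * max (v 0 - p.2 * (v 0 + v 1)) 0).sum = 0 := by
          refine List.sum_eq_zero fun x hx => ?_
          obtain ⟨p, hp, rfl⟩ := List.mem_map.1 hx
          simp [hv0, hv1]
        rw [hL0, hv0, hv1]
        ring
      · set s : ℝ := v 0 + v 1 with hsdef
        have hrep' := hrep (v 0 / s)
        have hcomp := Finset.comp_sup'_eq_sup'_comp (γ := ℝ) hZne
          (f := fun z => (c z 0 - c z 1) * (v 0 / s) + c z 1)
          (fun x => s * x) (fun x y => mul_max_of_nonneg x y hs.le)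
        have hDs : ((fun x => s * x) ∘ fun z => (c z 0 - c z 1) * (v 0 / s) + c z 1)
            = fun z : Z => D z v := by
          funext z
          simp only [Function.comp, hDdef]
          field_simp
          ring
        rw [hDs] at hcomp
        have hterm : ∀ p : ℝ × ℝ, s * (p.1 * max (v 0 / s - p.2) 0)
            = p.1 * max (v 0 - p.2 * s) 0 := by
          intro p
          rw [mul_comm s, mul_assoc]
          congr 1
          rw [mul_comm, mul_max_of_nonneg _ _ hs.le, mul_zero]
          congr 1
          field_simp
        have hLS : s * (c₀ + A * (v 0 / s) + (L.map fun p => p.1 * max (v 0 / s - p.2) 0).sum)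
            = c₀ * (v 0 + v 1) + A * v 0
              + (L.map fun p => p.1 * max (v 0 - p.2 * (v 0 + v 1)) 0).sum := by
          have h1 : s * (A * (v 0 / s)) = A * v 0 := by
            field_simp
          have h2 : s * (L.map fun p => p.1 * max (v 0 / s - p.2) 0).sum
              = (L.map fun p => p.1 * max (v 0 - p.2 * (v 0 + v 1)) 0).sum := by
            rw [← list_sum_map_mul]
            refine congrArg List.sum (List.map_congr_left fun p _ => ?_)
            rw [hterm p, hsdef]
          rw [mul_add, mul_add, h1, h2, hsdef]
          ring
        rw [← hcomp, hrep']
        exact hLS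
    -- support function inequality from zonotope inclusion
    have hΦ : ∀ θ : ℝ, (∑ z, max (μ 0 z - θ * (μ 0 z + μ 1 z)) 0)
        ≤ ∑ y, max (κ 0 y - θ * (κ 0 y + κ 1 y)) 0 := by
      intro θ
      set w : Z → ℝ := fun z => μ 0 z - θ * (μ 0 z + μ 1 z) with hwdef
      set aa : Z → ℝ := fun z => if 0 < w z then 1 else 0 with haadef
      have haa : ∀ z, aa z ∈ Set.Icc (0:ℝ) 1 := by
        intro z
        by_cases h : 0 < w z <;> simp [haadef, h]
      obtain ⟨bb, hbb, hvb⟩ := hsub ⟨aa, haa, rfl⟩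
      have hμside : (1-θ) * (μ.mulVec aa) 0 - θ * (μ.mulVec aa) 1 = ∑ z, max (w z) 0 := by
        have h0 : (μ.mulVec aa) 0 = ∑ z, μ 0 z * aa z := rfl
        have h1 : (μ.mulVec aa) 1 = ∑ z, μ 1 z * aa z := rfl
        rw [h0, h1, Finset.mul_sum, Finset.mul_sum, ← Finset.sum_sub_distrib]
        refine Finset.sum_congr rfl fun z _ => ?_
        by_cases h : 0 < w z
        · rw [max_eq_left h.le]
          simp only [haadef]
          rw [if_pos h]
          simp only [mul_one, hwdef]
          ring
        · rw [max_eq_right (not_lt.1 h)]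
          simp [haadef, if_neg h]
      have hκside : (1-θ) * (κ.mulVec bb) 0 - θ * (κ.mulVec bb) 1
          ≤ ∑ y, max (κ 0 y - θ * (κ 0 y + κ 1 y)) 0 := by
        have h0 : (κ.mulVec bb) 0 = ∑ y, κ 0 y * bb y := rfl
        have h1 : (κ.mulVec bb) 1 = ∑ y, κ 1 y * bb y := rfl
        rw [h0, h1, Finset.mul_sum, Finset.mul_sum, ← Finset.sum_sub_distrib]
        refine Finset.sum_le_sum fun y _ => ?_
        have hbby := hbb y
        have hrw : (1-θ) * (κ 0 y * bb y) - θ * (κ 1 y * bb y)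
            = bb y * (κ 0 y - θ * (κ 0 y + κ 1 y)) := by ring
        rw [hrw]
        rcases le_total 0 (κ 0 y - θ * (κ 0 y + κ 1 y)) with h | h
        · calc bb y * (κ 0 y - θ * (κ 0 y + κ 1 y)) ≤ 1 * (κ 0 y - θ * (κ 0 y + κ 1 y)) :=
                mul_le_mul_of_nonneg_right hbby.2 h
            _ ≤ max (κ 0 y - θ * (κ 0 y + κ 1 y)) 0 := by rw [one_mul]; exact le_max_left _ _
        · calc bb y * (κ 0 y - θ * (κ 0 y + κ 1 y)) ≤ 0 := mul_nonpos_of_nonneg_of_nonpos hbby.1 h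
            _ ≤ max (κ 0 y - θ * (κ 0 y + κ 1 y)) 0 := le_max_right _ _
      rw [hvb] at hμside
      linarith
    -- masses and means
    have hm2 : ∑ z, (μ 0 z + μ 1 z) = 2 := by
      rw [Finset.sum_add_distrib, hμ.2 0, hμ.2 1]; norm_num
    have hk2 : ∑ y, (κ 0 y + κ 1 y) = 2 := by
      rw [Finset.sum_add_distrib, hκ.2 0, hκ.2 1]; norm_num
    -- evaluate the two sums of sups
    have hAκ : ∑ y : Y, Finset.univ.sup' hZne (fun z' => D z' (fun x => κ x y))
        = c₀ * 2 + A * 1 + (L.map fun p => p.1 * ∑ y, max (κ 0 y - p.2 * (κ 0 y + κ 1 y)) 0).sum := by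
      rw [Finset.sum_congr rfl (fun y _ => h2d (fun x => κ x y) (hκ.1 0 y) (hκ.1 1 y))]
      rw [Finset.sum_add_distrib, Finset.sum_add_distrib, ← Finset.mul_sum, ← Finset.mul_sum,
        hk2, hκ.2 0]
      congr 1
      rw [list_swap]
      refine congrArg List.sum (List.map_congr_left fun p _ => ?_)
      rw [Finset.mul_sum]
    have hAμ : ∑ z : Z, Finset.univ.sup' hZne (fun z' => D z' (fun x => μ x z))
        = c₀ * 2 + A * 1 + (L.map fun p => p.1 * ∑ z, max (μ 0 z - p.2 * (μ 0 z + μ 1 z)) 0).sum := by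
      rw [Finset.sum_congr rfl (fun z _ => h2d (fun x => μ x z) (hμ.1 0 z) (hμ.1 1 z))]
      rw [Finset.sum_add_distrib, Finset.sum_add_distrib, ← Finset.mul_sum, ← Finset.mul_sum,
        hm2, hμ.2 0]
      congr 1
      rw [list_swap]
      refine congrArg List.sum (List.map_congr_left fun p _ => ?_)
      rw [Finset.mul_sum]
    have hle1 : ∑ z : Z, D z (fun x => μ x z)
        ≤ ∑ z : Z, Finset.univ.sup' hZne (fun z' => D z' (fun x => μ x z)) :=
      Finset.sum_le_sum fun z _ => Finset.le_sup' (fun z' => D z' (fun x => μ x z)) (Finset.mem_univ z)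
    have hle2 : (L.map fun p => p.1 * ∑ z, max (μ 0 z - p.2 * (μ 0 z + μ 1 z)) 0).sum
        ≤ (L.map fun p => p.1 * ∑ y, max (κ 0 y - p.2 * (κ 0 y + κ 1 y)) 0).sum :=
      List.sum_le_sum fun p hp => mul_le_mul_of_nonneg_left (hΦ p.2) (hLpos p hp)
    linarith
  · rintro ⟨lam, ⟨hl0, hl1⟩, rfl⟩ v ⟨a, ha, rfl⟩
    refine ⟨lam.mulVec a, fun y => ?_, (Matrix.mulVec_mulVec a κ lam).symm⟩
    have h1 : lam.mulVec a y = ∑ z, lam y z * a z := rfl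
    constructor
    · rw [h1]
      exact Finset.sum_nonneg fun z _ => mul_nonneg (hl0 y z) (ha z).1
    · rw [h1]
      calc ∑ z, lam y z * a z ≤ ∑ z, lam y z * 1 :=
            Finset.sum_le_sum fun z _ => mul_le_mul_of_nonneg_left (ha z).2 (hl0 y z)
        _ = 1 := by simpa using hl1 y
end

section
/- If X has more than 2 elements, then the majorization preorder on stochastic matrices with domain X does not admit greatest lower bounds in general: there exist κ₁, κ₂ ∈ K(X) such that no μ ∈ K(X) is a greatest common lower bound of κ₁ and κ₂ with respect to the majorization preorder. -/
/-- Majorization (Blackwell/degradation) order: \`μ\` can be obtained from \`κ\`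
by post-composing with a stochastic matrix. -/
def Maj {X Y Z : Type*} [Fintype Y] [Fintype Z]
    (κ : Matrix X Y ℝ) (μ : Matrix X Z ℝ) : Prop :=
  ∃ lam : Matrix Y Z ℝ, IsStochastic lam ∧ μ = κ * lam

/-! Auxiliary concrete matrices for the counterexample. -/

noncomputable def A3 : Matrix (Fin 3) (Fin 3) ℝ := !![1/3, 2/3, 0; 0, 1/3, 2/3; 2/3, 0, 1/3]
noncomputable def B3 : Matrix (Fin 3) (Fin 3) ℝ := !![2/3, 1/3, 0; 0, 2/3, 1/3; 1/3, 0, 2/3]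
noncomputable def W2 : Matrix (Fin 3) (Fin 2) ℝ := !![2/9, 7/9; 2/9, 7/9; 1/18, 17/18]
noncomputable def LA2 : Matrix (Fin 3) (Fin 2) ℝ := !![0, 1; 1/3, 2/3; 1/6, 5/6]
noncomputable def LB2 : Matrix (Fin 3) (Fin 2) ℝ := !![1/6, 5/6; 1/3, 2/3; 0, 1]
noncomputable def V3 : Matrix (Fin 3) (Fin 3) ℝ := !![2/9, 2/9, 5/9; 5/9, 2/9, 2/9; 2/9, 5/9, 2/9]
noncomputable def LA3 : Matrix (Fin 3) (Fin 3) ℝ := !![0, 2/3, 1/3; 1/3, 0, 2/3; 2/3, 1/3, 0]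
noncomputable def LB3 : Matrix (Fin 3) (Fin 3) ℝ := !![0, 1/3, 2/3; 2/3, 0, 1/3; 1/3, 2/3, 0]

lemma A3_stoch : IsStochastic A3 :=
  ⟨by intro i j; fin_cases i <;> fin_cases j <;> norm_num [A3],
   by intro i; fin_cases i <;> norm_num [A3, Fin.sum_univ_three, Matrix.cons_val_two, Matrix.tail_cons, Matrix.head_cons]⟩

lemma B3_stoch : IsStochastic B3 :=
  ⟨by intro i j; fin_cases i <;> fin_cases j <;> norm_num [B3],
   by intro i; fin_cases i <;> norm_num [B3, Fin.sum_univ_three, Matrix.cons_val_two, Matrix.tail_cons, Matrix.head_cons]⟩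

lemma W2_stoch : IsStochastic W2 :=
  ⟨by intro i j; fin_cases i <;> fin_cases j <;> norm_num [W2, Matrix.cons_val_two, Matrix.tail_cons, Matrix.head_cons],
   by intro i; fin_cases i <;> norm_num [W2, Fin.sum_univ_two]⟩

lemma LA2_stoch : IsStochastic LA2 :=
  ⟨by intro i j; fin_cases i <;> fin_cases j <;> norm_num [LA2],
   by intro i; fin_cases i <;> norm_num [LA2, Fin.sum_univ_two]⟩

lemma LB2_stoch : IsStochastic LB2 :=
  ⟨by intro i j; fin_cases i <;> fin_cases j <;> norm_num [LB2],
   by intro i; fin_cases i <;> norm_num [LB2, Fin.sum_univ_two]⟩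

lemma V3_stoch : IsStochastic V3 :=
  ⟨by intro i j; fin_cases i <;> fin_cases j <;> norm_num [V3],
   by intro i; fin_cases i <;> norm_num [V3, Fin.sum_univ_three, Matrix.cons_val_two, Matrix.tail_cons, Matrix.head_cons]⟩

lemma LA3_stoch : IsStochastic LA3 :=
  ⟨by intro i j; fin_cases i <;> fin_cases j <;> norm_num [LA3],
   by intro i; fin_cases i <;> norm_num [LA3, Fin.sum_univ_three, Matrix.cons_val_two, Matrix.tail_cons, Matrix.head_cons]⟩

lemma LB3_stoch : IsStochastic LB3 :=
  ⟨by intro i j; fin_cases i <;> fin_cases j <;> norm_num [LB3],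
   by intro i; fin_cases i <;> norm_num [LB3, Fin.sum_univ_three, Matrix.cons_val_two, Matrix.tail_cons, Matrix.head_cons]⟩

lemma mulA2 : A3 * LA2 = W2 := by
  ext i j
  fin_cases i <;> fin_cases j <;>
    norm_num [Matrix.mul_apply, Fin.sum_univ_three, A3, LA2, W2, Matrix.cons_val_two, Matrix.tail_cons, Matrix.head_cons]

lemma mulB2 : B3 * LB2 = W2 := by
  ext i j
  fin_cases i <;> fin_cases j <;>
    norm_num [Matrix.mul_apply, Fin.sum_univ_three, B3, LB2, W2, Matrix.cons_val_two, Matrix.tail_cons, Matrix.head_cons]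

lemma mulA3 : A3 * LA3 = V3 := by
  ext i j
  fin_cases i <;> fin_cases j <;>
    norm_num [Matrix.mul_apply, Fin.sum_univ_three, A3, LA3, V3, Matrix.cons_val_two, Matrix.tail_cons, Matrix.head_cons]

lemma mulB3 : B3 * LB3 = V3 := by
  ext i j
  fin_cases i <;> fin_cases j <;>
    norm_num [Matrix.mul_apply, Fin.sum_univ_three, B3, LB3, V3, Matrix.cons_val_two, Matrix.tail_cons, Matrix.head_cons]

lemma sum_vanish {m : ℕ} (F : Fin m → ℝ) (hF : ∀ z, 0 ≤ F z)
    (h : ∑ z, F z = 0) (z : Fin m) : F z = 0 :=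
  (Finset.sum_eq_zero_iff_of_nonneg (fun z _ => hF z)).mp h z (Finset.mem_univ z)

lemma exists_pos_term {m : ℕ} (F : Fin m → ℝ) (h : 0 < ∑ z, F z) : ∃ z, 0 < F z := by
  by_contra hc
  push_neg at hc
  exact absurd (Finset.sum_nonpos fun z _ => hc z) (not_le.mpr h)

lemma comb_sum {m : ℕ} (p q r c : Fin m → ℝ) (a b d tp tq tr : ℝ)
    (hp : ∑ z, p z * c z = tp) (hq : ∑ z, q z * c z = tq) (hr : ∑ z, r z * c z = tr) :
    ∑ z, (a * p z + b * q z + d * r z) * c z = a * tp + b * tq + d * tr := by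
  have key : ∀ z : Fin m, (a * p z + b * q z + d * r z) * c z
      = a * (p z * c z) + b * (q z * c z) + d * (r z * c z) := by
    intro z; ring
  rw [Finset.sum_congr rfl (fun z _ => key z), Finset.sum_add_distrib,
    Finset.sum_add_distrib, ← Finset.mul_sum, ← Finset.mul_sum, ← Finset.mul_sum,
    hp, hq, hr]

theorem no_greatest_lower_bound {X : Type*} [Fintype X] (hX : 2 < Fintype.card X) :
    ∃ (n₁ n₂ : ℕ) (κ₁ : Matrix X (Fin n₁) ℝ) (κ₂ : Matrix X (Fin n₂) ℝ),
      IsStochastic κ₁ ∧ IsStochastic κ₂ ∧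
      ¬ ∃ (m : ℕ) (μ : Matrix X (Fin m) ℝ),
          IsStochastic μ ∧ Maj κ₁ μ ∧ Maj κ₂ μ ∧
          ∀ (m' : ℕ) (μ' : Matrix X (Fin m') ℝ),
            IsStochastic μ' → Maj κ₁ μ' → Maj κ₂ μ' → Maj μ μ' := by
  classical
  obtain ⟨f⟩ : Nonempty (Fin 3 ↪ X) := by
    apply Function.Embedding.nonempty_of_card_le
    simpa using Nat.succ_le_of_lt hX
  set g : X → Fin 3 := fun x => if h : ∃ i : Fin 3, f i = x then h.choose else 0 with hgdef
  have hgf : ∀ i : Fin 3, g (f i) = i := by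
    intro i
    have hex : ∃ j : Fin 3, f j = f i := ⟨i, rfl⟩
    simp only [hgdef, dif_pos hex]
    exact f.injective hex.choose_spec
  refine ⟨3, 3, fun x y => A3 (g x) y, fun x y => B3 (g x) y,
    ⟨fun x y => A3_stoch.1 (g x) y, fun x => A3_stoch.2 (g x)⟩,
    ⟨fun x y => B3_stoch.1 (g x) y, fun x => B3_stoch.2 (g x)⟩, ?_⟩
  rintro ⟨m, μ, hμS, ⟨l1, hl1, hμ1⟩, ⟨l2, hl2, hμ2⟩, hglb⟩
  -- restricted rows of μ as combinations of rows of A3, B3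
  have hMA : ∀ (i : Fin 3) (z : Fin m),
      μ (f i) z = A3 i 0 * l1 0 z + A3 i 1 * l1 1 z + A3 i 2 * l1 2 z := by
    intro i z
    have := congrFun (congrFun hμ1 (f i)) z
    rw [this]; show ∑ j, A3 (g (f i)) j * l1 j z = _; rw [Fin.sum_univ_three, hgf]
  have hMB : ∀ (i : Fin 3) (z : Fin m),
      μ (f i) z = B3 i 0 * l2 0 z + B3 i 1 * l2 1 z + B3 i 2 * l2 2 z := by
    intro i z
    have := congrFun (congrFun hμ2 (f i)) z
    rw [this]; show ∑ j, B3 (g (f i)) j * l2 j z = _; rw [Fin.sum_univ_three, hgf]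
  -- the six facet functionals are nonnegative on columns of the restricted μ
  have hL0 : ∀ z, 0 ≤ μ (f 0) z - 2 * μ (f 1) z + 4 * μ (f 2) z := by
    intro z
    rw [hMA 0 z, hMA 1 z, hMA 2 z]
    have h0 := hl1.1 0 z; have h1 := hl1.1 1 z; have h2 := hl1.1 2 z
    norm_num [A3, Matrix.cons_val_two, Matrix.tail_cons, Matrix.head_cons]; linarith
  have hL1 : ∀ z, 0 ≤ 4 * μ (f 0) z + μ (f 1) z - 2 * μ (f 2) z := by
    intro z
    rw [hMA 0 z, hMA 1 z, hMA 2 z]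
    have h0 := hl1.1 0 z; have h1 := hl1.1 1 z; have h2 := hl1.1 2 z
    norm_num [A3, Matrix.cons_val_two, Matrix.tail_cons, Matrix.head_cons]; linarith
  have hL2 : ∀ z, 0 ≤ -2 * μ (f 0) z + 4 * μ (f 1) z + μ (f 2) z := by
    intro z
    rw [hMA 0 z, hMA 1 z, hMA 2 z]
    have h0 := hl1.1 0 z; have h1 := hl1.1 1 z; have h2 := hl1.1 2 z
    norm_num [A3, Matrix.cons_val_two, Matrix.tail_cons, Matrix.head_cons]; linarith
  have hL3 : ∀ z, 0 ≤ 4 * μ (f 0) z - 2 * μ (f 1) z + μ (f 2) z := by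
    intro z
    rw [hMB 0 z, hMB 1 z, hMB 2 z]
    have h0 := hl2.1 0 z; have h1 := hl2.1 1 z; have h2 := hl2.1 2 z
    norm_num [B3, Matrix.cons_val_two, Matrix.tail_cons, Matrix.head_cons]; linarith
  have hL5 : ∀ z, 0 ≤ -2 * μ (f 0) z + μ (f 1) z + 4 * μ (f 2) z := by
    intro z
    rw [hMB 0 z, hMB 1 z, hMB 2 z]
    have h0 := hl2.1 0 z; have h1 := hl2.1 1 z; have h2 := hl2.1 2 z
    norm_num [B3, Matrix.cons_val_two, Matrix.tail_cons, Matrix.head_cons]; linarith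
  -- Step 1: the lower bound with a column in direction (4,4,1)
  have hmaj2 : Maj μ (fun x z => W2 (g x) z) := by
    apply hglb 2
    · exact ⟨fun x z => W2_stoch.1 (g x) z, fun x => W2_stoch.2 (g x)⟩
    · refine ⟨LA2, LA2_stoch, ?_⟩
      funext x z
      have := congrFun (congrFun mulA2 (g x)) z
      rw [← this]; rfl
    · refine ⟨LB2, LB2_stoch, ?_⟩
      funext x z
      have := congrFun (congrFun mulB2 (g x)) z
      rw [← this]; rfl
  obtain ⟨l', hl', hEq'⟩ := hmaj2
  have hc1 : ∀ i : Fin 3, ∑ z, μ (f i) z * l' z 0 = W2 i 0 := by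
    intro i
    have := congrFun (congrFun hEq' (f i)) 0
    rw [Matrix.mul_apply] at this
    rw [← this, hgf]
  -- the two tight functionals of (4,4,1) vanish against the first column of l'
  have hvan0 : ∀ z, (1 * μ (f 0) z + (-2) * μ (f 1) z + 4 * μ (f 2) z) * l' z 0 = 0 := by
    apply sum_vanish
    · intro z
      apply mul_nonneg _ (hl'.1 z 0)
      have := hL0 z; linarith
    · rw [comb_sum _ _ _ _ 1 (-2) 4 _ _ _ (hc1 0) (hc1 1) (hc1 2)]
      norm_num [W2, Matrix.cons_val_two, Matrix.tail_cons, Matrix.head_cons]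
  have hvan5 : ∀ z, ((-2) * μ (f 0) z + 1 * μ (f 1) z + 4 * μ (f 2) z) * l' z 0 = 0 := by
    apply sum_vanish
    · intro z
      apply mul_nonneg _ (hl'.1 z 0)
      have := hL5 z; linarith
    · rw [comb_sum _ _ _ _ (-2) 1 4 _ _ _ (hc1 0) (hc1 1) (hc1 2)]
      norm_num [W2, Matrix.cons_val_two, Matrix.tail_cons, Matrix.head_cons]
  -- find the column z₀ of μ proportional to (4,4,1)
  obtain ⟨z₀, hz₀⟩ : ∃ z, 0 < μ (f 2) z * l' z 0 := by
    apply exists_pos_term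
    rw [hc1 2]; norm_num [W2, Matrix.cons_val_two, Matrix.tail_cons, Matrix.head_cons]
  have hlpos : 0 < l' z₀ 0 := by
    by_contra h
    push_neg at h
    nlinarith [hμS.1 (f 2) z₀, hl'.1 z₀ 0]
  have htpos : 0 < μ (f 2) z₀ := by
    by_contra h
    push_neg at h
    nlinarith [hμS.1 (f 2) z₀, hl'.1 z₀ 0]
  have e0 : 1 * μ (f 0) z₀ + (-2) * μ (f 1) z₀ + 4 * μ (f 2) z₀ = 0 := by
    rcases mul_eq_zero.mp (hvan0 z₀) with h | h
    · exact h
    · exact absurd h (ne_of_gt hlpos)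
  have e5 : (-2) * μ (f 0) z₀ + 1 * μ (f 1) z₀ + 4 * μ (f 2) z₀ = 0 := by
    rcases mul_eq_zero.mp (hvan5 z₀) with h | h
    · exact h
    · exact absurd h (ne_of_gt hlpos)
  have hx0 : μ (f 0) z₀ = 4 * μ (f 2) z₀ := by linarith
  have hx1 : μ (f 1) z₀ = 4 * μ (f 2) z₀ := by linarith
  -- Step 2: the lower bound with columns the other three hexagon vertices
  have hmaj3 : Maj μ (fun x z => V3 (g x) z) := by
    apply hglb 3
    · exact ⟨fun x z => V3_stoch.1 (g x) z, fun x => V3_stoch.2 (g x)⟩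
    · refine ⟨LA3, LA3_stoch, ?_⟩
      funext x z
      have := congrFun (congrFun mulA3 (g x)) z
      rw [← this]; rfl
    · refine ⟨LB3, LB3_stoch, ?_⟩
      funext x z
      have := congrFun (congrFun mulB3 (g x)) z
      rw [← this]; rfl
  obtain ⟨l'', hl'', hEq''⟩ := hmaj3
  have hc2 : ∀ (i : Fin 3) (k : Fin 3), ∑ z, μ (f i) z * l'' z k = V3 i k := by
    intro i k
    have := congrFun (congrFun hEq'' (f i)) k
    rw [Matrix.mul_apply] at this
    rw [← this, hgf]
  -- some entry in row z₀ of l'' is positive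
  have hrow : l'' z₀ 0 + l'' z₀ 1 + l'' z₀ 2 = 1 := by
    have := hl''.2 z₀
    rwa [Fin.sum_univ_three] at this
  obtain ⟨k, hk⟩ : ∃ k : Fin 3, 0 < l'' z₀ k := by
    by_contra h
    push_neg at h
    have := h 0; have := h 1; have := h 2
    linarith
  -- for each k, one of the facet functionals of the k-th column of V3 is
  -- strictly positive at the (4,4,1)-direction column z₀ : contradiction
  fin_cases k
  · have hvan : ∀ z, (4 * μ (f 0) z + (-2) * μ (f 1) z + 1 * μ (f 2) z) * l'' z 0 = 0 := by
      apply sum_vanish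
      · intro z
        apply mul_nonneg _ (hl''.1 z 0)
        have := hL3 z; linarith
      · rw [comb_sum _ _ _ _ 4 (-2) 1 _ _ _ (hc2 0 0) (hc2 1 0) (hc2 2 0)]
        norm_num [V3, Matrix.cons_val_two, Matrix.tail_cons, Matrix.head_cons, Matrix.vecHead, Matrix.vecTail]
    have hv := hvan z₀
    rw [hx0, hx1] at hv
    have hk' : 0 < l'' z₀ 0 := by simpa using hk
    have h9 : (9 * μ (f 2) z₀) * l'' z₀ 0 = 0 := by linear_combination hv
    have hpos : (0:ℝ) < (9 * μ (f 2) z₀) * l'' z₀ 0 :=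
      mul_pos (by linarith) hk'
    linarith
  · have hvan : ∀ z, (4 * μ (f 0) z + 1 * μ (f 1) z + (-2) * μ (f 2) z) * l'' z 1 = 0 := by
      apply sum_vanish
      · intro z
        apply mul_nonneg _ (hl''.1 z 1)
        have := hL1 z; linarith
      · rw [comb_sum _ _ _ _ 4 1 (-2) _ _ _ (hc2 0 1) (hc2 1 1) (hc2 2 1)]
        norm_num [V3, Matrix.cons_val_two, Matrix.tail_cons, Matrix.head_cons, Matrix.vecHead, Matrix.vecTail]
    have hv := hvan z₀
    rw [hx0, hx1] at hv
    have hk' : 0 < l'' z₀ 1 := by simpa using hk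
    have h9 : (18 * μ (f 2) z₀) * l'' z₀ 1 = 0 := by linear_combination hv
    have hpos : (0:ℝ) < (18 * μ (f 2) z₀) * l'' z₀ 1 :=
      mul_pos (by linarith) hk'
    linarith
  · have hvan : ∀ z, ((-2) * μ (f 0) z + 4 * μ (f 1) z + 1 * μ (f 2) z) * l'' z 2 = 0 := by
      apply sum_vanish
      · intro z
        apply mul_nonneg _ (hl''.1 z 2)
        have := hL2 z; linarith
      · rw [comb_sum _ _ _ _ (-2) 4 1 _ _ _ (hc2 0 2) (hc2 1 2) (hc2 2 2)]
        norm_num [V3, Matrix.cons_val_two, Matrix.tail_cons, Matrix.head_cons, Matrix.vecHead, Matrix.vecTail]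
    have hv := hvan z₀
    rw [hx0, hx1] at hv
    have hk' : 0 < l'' z₀ 2 := by simpa using hk
    have h9 : (9 * μ (f 2) z₀) * l'' z₀ 2 = 0 := by linear_combination hv
    have hpos : (0:ℝ) < (9 * μ (f 2) z₀) * l'' z₀ 2 :=
      mul_pos (by linarith) hk'
    linarith
end

section
/- If X has more than 2 elements, the majorization preorder on K(X) does not admit least upper bounds in general: there is a finite family of stochastic matrices with domain X that has upper bounds but no least upper bound. -/
namespace NLUB

noncomputable def R3 : Fin 3 → Fin 4 → ℝ :=
  ![![1/2, 0, 1/4, 1/4], ![0, 1/2, 0, 1/2], ![0, 0, 1/4, 3/4]]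

noncomputable def S3 : Fin 3 → Fin 4 → ℝ :=
  ![![1/2, 0, 1/4, 1/4], ![0, 1/2, 1/2, 0], ![0, 0, 1/4, 3/4]]

noncomputable def AV : Fin 3 → Fin 4 → ℝ := ![![1,0,0,0], ![1,1,0,0], ![1,1,1,0]]
noncomputable def BV : Fin 3 → Fin 4 → ℝ := ![![1,0,0,0], ![1,1,0,0], ![1,0,1,0]]

lemma R3_nonneg (r : Fin 3) (k : Fin 4) : 0 ≤ R3 r k := by
  fin_cases r <;> fin_cases k <;> norm_num [R3]

lemma S3_nonneg (r : Fin 3) (k : Fin 4) : 0 ≤ S3 r k := by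
  fin_cases r <;> fin_cases k <;> norm_num [S3]

lemma R3_rowsum (r : Fin 3) : ∑ k, R3 r k = 1 := by
  fin_cases r <;> norm_num [R3, Fin.sum_univ_four, Matrix.cons_val_two, Matrix.cons_val_three]

lemma S3_rowsum (r : Fin 3) : ∑ k, S3 r k = 1 := by
  fin_cases r <;> norm_num [S3, Fin.sum_univ_four, Matrix.cons_val_two, Matrix.cons_val_three]

lemma AV01 (i : Fin 3) (k : Fin 4) : 0 ≤ AV i k ∧ AV i k ≤ 1 := by
  fin_cases i <;> fin_cases k <;> norm_num [AV]

lemma BV01 (i : Fin 3) (k : Fin 4) : 0 ≤ BV i k ∧ BV i k ≤ 1 := by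
  fin_cases i <;> fin_cases k <;> norm_num [BV]

lemma consist (i : Fin 3) (r : Fin 3) :
    ∑ k, S3 r k * BV i k = ∑ k, R3 r k * AV i k := by
  fin_cases i <;> fin_cases r <;> norm_num [S3, R3, AV, BV, Fin.sum_univ_four, Matrix.cons_val_two, Matrix.cons_val_three]

lemma R3_theta (γ : Fin 4 → ℝ) :
    (∑ k, R3 0 k * γ k) - (∑ k, R3 2 k * γ k) = 1/2 * γ 0 - 1/2 * γ 3 := by
  norm_num [R3, Fin.sum_univ_four, Matrix.cons_val_two, Matrix.cons_val_three] <;> ring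

lemma R3_b (γ : Fin 4 → ℝ) : ∑ k, R3 1 k * γ k = 1/2 * γ 1 + 1/2 * γ 3 := by
  norm_num [R3, Fin.sum_univ_four, Matrix.cons_val_two, Matrix.cons_val_three] <;> ring

lemma R3_c (γ : Fin 4 → ℝ) : ∑ k, R3 2 k * γ k = 1/4 * γ 2 + 3/4 * γ 3 := by
  norm_num [R3, Fin.sum_univ_four, Matrix.cons_val_two, Matrix.cons_val_three] <;> ring

lemma S3_theta (γ : Fin 4 → ℝ) :
    (∑ k, S3 0 k * γ k) - (∑ k, S3 2 k * γ k) = 1/2 * γ 0 - 1/2 * γ 3 := by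
  norm_num [S3, Fin.sum_univ_four, Matrix.cons_val_two, Matrix.cons_val_three] <;> ring

lemma S3_b (γ : Fin 4 → ℝ) : ∑ k, S3 1 k * γ k = 1/2 * γ 1 + 1/2 * γ 2 := by
  norm_num [S3, Fin.sum_univ_four, Matrix.cons_val_two, Matrix.cons_val_three] <;> ring

lemma S3_c (γ : Fin 4 → ℝ) : ∑ k, S3 2 k * γ k = 1/4 * γ 2 + 3/4 * γ 3 := by
  norm_num [S3, Fin.sum_univ_four, Matrix.cons_val_two, Matrix.cons_val_three] <;> ring

noncomputable def KA {X : Type*} (cls : X → Fin 3) : Matrix X (Fin 4) ℝ :=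
  Matrix.of fun x k => R3 (cls x) k

noncomputable def KB {X : Type*} (cls : X → Fin 3) : Matrix X (Fin 4) ℝ :=
  Matrix.of fun x k => S3 (cls x) k

noncomputable def vv {X : Type*} (cls : X → Fin 3) (i : Fin 3) (x : X) : ℝ :=
  ∑ k, KA cls x k * AV i k

noncomputable def MU {X : Type*} (cls : X → Fin 3) (i : Fin 3) : Matrix X (Fin 2) ℝ :=
  Matrix.of fun x j => if j = 0 then vv cls i x else 1 - vv cls i x

noncomputable def LA (i : Fin 3) : Matrix (Fin 4) (Fin 2) ℝ :=
  Matrix.of fun k j => if j = 0 then AV i k else 1 - AV i k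

noncomputable def LB (i : Fin 3) : Matrix (Fin 4) (Fin 2) ℝ :=
  Matrix.of fun k j => if j = 0 then BV i k else 1 - BV i k

lemma KA_stoch {X : Type*} (cls : X → Fin 3) : IsStochastic (KA cls) :=
  ⟨fun x k => R3_nonneg _ _, fun x => R3_rowsum _⟩

lemma KB_stoch {X : Type*} (cls : X → Fin 3) : IsStochastic (KB cls) :=
  ⟨fun x k => S3_nonneg _ _, fun x => S3_rowsum _⟩

lemma entry_le_one {Y Z : Type*} [Fintype Z] {σ : Matrix Y Z ℝ} (h : IsStochastic σ)
    (y : Y) (z : Z) : σ y z ≤ 1 := by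
  calc σ y z ≤ ∑ z', σ y z' :=
        Finset.single_le_sum (fun z' _ => h.1 y z') (Finset.mem_univ z)
    _ = 1 := h.2 y

lemma vv_nonneg {X : Type*} (cls : X → Fin 3) (i : Fin 3) (x : X) : 0 ≤ vv cls i x :=
  Finset.sum_nonneg fun k _ => mul_nonneg (R3_nonneg _ _) (AV01 i k).1

lemma vv_le_one {X : Type*} (cls : X → Fin 3) (i : Fin 3) (x : X) : vv cls i x ≤ 1 := by
  calc vv cls i x ≤ ∑ k, KA cls x k * 1 :=
        Finset.sum_le_sum fun k _ =>
          mul_le_mul_of_nonneg_left (AV01 i k).2 (R3_nonneg _ _)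
    _ = 1 := by simpa [KA] using R3_rowsum (cls x)

lemma MU_stoch {X : Type*} (cls : X → Fin 3) (i : Fin 3) : IsStochastic (MU cls i) := by
  constructor
  · intro x j
    by_cases hj : j = 0 <;>
      simp [MU, hj, vv_nonneg cls i x, vv_le_one cls i x]
  · intro x
    simp [MU, Fin.sum_univ_two]

lemma LA_stoch (i : Fin 3) : IsStochastic (LA i) := by
  constructor
  · intro k j
    by_cases hj : j = 0 <;> simp [LA, hj, (AV01 i k).1, (AV01 i k).2]
  · intro k
    simp [LA, Fin.sum_univ_two]

lemma LB_stoch (i : Fin 3) : IsStochastic (LB i) := by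
  constructor
  · intro k j
    by_cases hj : j = 0 <;> simp [LB, hj, (BV01 i k).1, (BV01 i k).2]
  · intro k
    simp [LB, Fin.sum_univ_two]

lemma majA {X : Type*} (cls : X → Fin 3) (i : Fin 3) : Maj (KA cls) (MU cls i) := by
  refine ⟨LA i, LA_stoch i, ?_⟩
  funext x j
  rw [Matrix.mul_apply]
  by_cases hj : j = 0
  · subst hj
    have h0 : ∀ k, LA i k 0 = AV i k := fun k => by simp [LA]
    simp only [h0]
    have h1 : MU cls i x 0 = vv cls i x := by simp [MU]
    have h2 : vv cls i x = ∑ k, KA cls x k * AV i k := rfl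
    rw [h1, h2]
  · have hj1 : j = 1 := by omega
    subst hj1
    have h0 : ∀ k, LA i k 1 = 1 - AV i k := fun k => by simp [LA]
    simp only [h0]
    have h1 : MU cls i x 1 = 1 - vv cls i x := by simp [MU]
    have h4 : ∑ k, KA cls x k * (1 - AV i k)
        = (∑ k, KA cls x k) - ∑ k, KA cls x k * AV i k := by
      rw [← Finset.sum_sub_distrib]; congr 1; ext k; ring
    have h2 : vv cls i x = ∑ k, KA cls x k * AV i k := rfl
    rw [h1, h4, (KA_stoch cls).2 x, h2]

lemma majB {X : Type*} (cls : X → Fin 3) (i : Fin 3) : Maj (KB cls) (MU cls i) := by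
  refine ⟨LB i, LB_stoch i, ?_⟩
  funext x j
  rw [Matrix.mul_apply]
  have hcons : ∑ k, KB cls x k * BV i k = vv cls i x := by
    have h3 : ∑ k, KB cls x k * BV i k = ∑ k, S3 (cls x) k * BV i k := rfl
    have h2 : vv cls i x = ∑ k, R3 (cls x) k * AV i k := rfl
    rw [h3, h2, consist]
  by_cases hj : j = 0
  · subst hj
    have h0 : ∀ k, LB i k 0 = BV i k := fun k => by simp [LB]
    simp only [h0]
    have h1 : MU cls i x 0 = vv cls i x := by simp [MU]
    rw [h1, hcons]
  · have hj1 : j = 1 := by omega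
    subst hj1
    have h0 : ∀ k, LB i k 1 = 1 - BV i k := fun k => by simp [LB]
    simp only [h0]
    have h1 : MU cls i x 1 = 1 - vv cls i x := by simp [MU]
    have h4 : ∑ k, KB cls x k * (1 - BV i k)
        = (∑ k, KB cls x k) - ∑ k, KB cls x k * BV i k := by
      rw [← Finset.sum_sub_distrib]; congr 1; ext k; ring
    rw [h1, h4, (KB_stoch cls).2 x, hcons]

lemma sum_swap_mul {n N : ℕ} (A : Fin N → ℝ) (L : Fin N → Fin n → ℝ) (t : Fin n → ℝ) :
    ∑ j, (∑ k, A k * L k j) * t j = ∑ k, A k * ∑ j, L k j * t j := by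
  simp_rw [Finset.sum_mul, Finset.mul_sum, ← mul_assoc]
  exact Finset.sum_comm

end NLUB

theorem no_least_upper_bound {X : Type*} [Fintype X] (hX : 2 < Fintype.card X) :
    ∃ (k : ℕ) (m : Fin k → ℕ) (μ : ∀ i : Fin k, Matrix X (Fin (m i)) ℝ),
      (∀ i, IsStochastic (μ i)) ∧
      (∃ (n : ℕ) (κ : Matrix X (Fin n) ℝ), IsStochastic κ ∧ ∀ i, Maj κ (μ i)) ∧
      ¬ ∃ (n : ℕ) (κ : Matrix X (Fin n) ℝ),
          IsStochastic κ ∧ (∀ i, Maj κ (μ i)) ∧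
          ∀ (n' : ℕ) (κ' : Matrix X (Fin n') ℝ),
            IsStochastic κ' → (∀ i, Maj κ' (μ i)) → Maj κ' κ := by
  classical
  -- pick three distinct elements
  obtain ⟨a, b, hab⟩ := Fintype.exists_pair_of_one_lt_card (α := X) (by omega)
  obtain ⟨c, hca, hcb⟩ : ∃ c : X, c ≠ a ∧ c ≠ b := by
    by_contra h
    push_neg at h
    have hsub : (Finset.univ : Finset X) ⊆ {a, b} := by
      intro x _
      by_cases hxa : x = a
      · simp [hxa]
      · simp [h x hxa]
    have h2 : ({a, b} : Finset X).card ≤ 2 :=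
      (Finset.card_insert_le _ _).trans (by simp)
    have := (Finset.card_le_card hsub).trans h2
    simp [Finset.card_univ] at this
    omega
  set cls : X → Fin 3 := fun x => if x = a then 0 else if x = b then 1 else 2 with hcls
  have cls_a : cls a = 0 := by simp [hcls]
  have cls_b : cls b = 1 := by simp [hcls, (Ne.symm hab)]
  have cls_c : cls c = 2 := by simp [hcls, hca, hcb]
  refine ⟨3, fun _ => 2, NLUB.MU cls, NLUB.MU_stoch cls,
    ⟨4, NLUB.KA cls, NLUB.KA_stoch cls, NLUB.majA cls⟩, ?_⟩
  rintro ⟨n, κ, hκs, hub, hlub⟩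
  -- κ is majorized by both KA and KB
  obtain ⟨lam, hlam, hEA⟩ := hlub 4 (NLUB.KA cls) (NLUB.KA_stoch cls) (NLUB.majA cls)
  obtain ⟨rho, hrho, hEB⟩ := hlub 4 (NLUB.KB cls) (NLUB.KB_stoch cls) (NLUB.majB cls)
  have hκA : ∀ x j, κ x j = ∑ k, NLUB.R3 (cls x) k * lam k j := by
    intro x j
    have := congrFun (congrFun hEA x) j
    rw [this, Matrix.mul_apply]; rfl
  have hκB : ∀ x j, κ x j = ∑ k, NLUB.S3 (cls x) k * rho k j := by
    intro x j
    have := congrFun (congrFun hEB x) j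
    rw [this, Matrix.mul_apply]; rfl
  -- the vectors v_i are realized by κ
  have hu : ∀ i : Fin 3, ∃ u : Fin n → ℝ,
      (∀ j, 0 ≤ u j ∧ u j ≤ 1) ∧ ∀ x, NLUB.vv cls i x = ∑ j, κ x j * u j := by
    intro i
    obtain ⟨σ, hσ, hμ⟩ := hub i
    refine ⟨fun j => σ j 0, fun j => ⟨hσ.1 j 0, NLUB.entry_le_one hσ j 0⟩, fun x => ?_⟩
    have := congrFun (congrFun hμ x) 0
    rw [Matrix.mul_apply] at this
    simpa [NLUB.MU] using this
  choose u hu01 huv using hu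
  -- θ-values of the columns of κ
  set s : Fin n → ℝ := fun j => κ a j - κ c j with hs_def
  have hs : ∀ j, s j = 1/2 * lam 0 j - 1/2 * lam 3 j := by
    intro j
    rw [hs_def]
    simp only [hκA a j, hκA c j, cls_a, cls_c]
    exact NLUB.R3_theta (fun k => lam k j)
  set S : ℝ := ∑ j, max (s j) 0 with hS_def
  have hS_le : S ≤ 1/2 := by
    have h1 : ∀ j, max (s j) 0 ≤ 1/2 * lam 0 j := by
      intro j
      have h0 := hlam.1 0 j
      have h3 := hlam.1 3 j
      have := hs j
      apply max_le <;> linarith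
    calc S ≤ ∑ j, 1/2 * lam 0 j := Finset.sum_le_sum fun j _ => h1 j
      _ = 1/2 * ∑ j, lam 0 j := by rw [Finset.mul_sum]
      _ = 1/2 := by rw [hlam.2 0]; ring
  -- θ-value of each v i is 1/2
  have hvac : ∀ i : Fin 3, NLUB.vv cls i a - NLUB.vv cls i c = 1/2 := by
    intro i
    have : NLUB.vv cls i a - NLUB.vv cls i c
        = (∑ k, NLUB.R3 0 k * NLUB.AV i k) - (∑ k, NLUB.R3 2 k * NLUB.AV i k) := by
      simp [NLUB.vv, NLUB.KA, cls_a, cls_c]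
    rw [this, NLUB.R3_theta]
    fin_cases i <;> norm_num [NLUB.AV, Matrix.vecHead, Matrix.vecTail, Matrix.cons_val_two, Matrix.cons_val_three]
  have hE : ∀ i : Fin 3, ∑ j, s j * u i j = 1/2 := by
    intro i
    have h1 : ∑ j, s j * u i j = (∑ j, κ a j * u i j) - ∑ j, κ c j * u i j := by
      rw [← Finset.sum_sub_distrib]
      congr 1; ext j; rw [hs_def]; ring
    rw [h1, ← huv i a, ← huv i c, hvac i]
  -- squeeze: equalities
  have hmaxu : ∀ i : Fin 3, ∑ j, max (s j) 0 * u i j = 1/2 := by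
    intro i
    have hle1 : ∑ j, s j * u i j ≤ ∑ j, max (s j) 0 * u i j :=
      Finset.sum_le_sum fun j _ =>
        mul_le_mul_of_nonneg_right (le_max_left _ _) (hu01 i j).1
    have hle2 : ∑ j, max (s j) 0 * u i j ≤ S := by
      rw [hS_def]
      refine Finset.sum_le_sum fun j _ => ?_
      have := (hu01 i j).2
      have hm : (0:ℝ) ≤ max (s j) 0 := le_max_right _ _
      nlinarith
    have := hE i
    linarith
  have hSeq : S = 1/2 := by
    have hle2 : ∑ j, max (s j) 0 * u 0 j ≤ S := by
      rw [hS_def]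
      refine Finset.sum_le_sum fun j _ => ?_
      have := (hu01 0 j).2
      have hm : (0:ℝ) ≤ max (s j) 0 := le_max_right _ _
      nlinarith
    have := hmaxu 0
    linarith
  -- pointwise equality conditions
  have hu_pos : ∀ (i : Fin 3) j, 0 < s j → u i j = 1 := by
    intro i j hsj
    have hzero : ∑ j, max (s j) 0 * (1 - u i j) = 0 := by
      have : ∑ j, max (s j) 0 * (1 - u i j)
          = S - ∑ j, max (s j) 0 * u i j := by
        rw [hS_def, ← Finset.sum_sub_distrib]
        congr 1; ext j; ring
      rw [this, hSeq, hmaxu i]; ring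
    have hterm := (Finset.sum_eq_zero_iff_of_nonneg (fun j _ => by
      have := (hu01 i j).2
      have hm : (0:ℝ) ≤ max (s j) 0 := le_max_right _ _
      nlinarith)).mp hzero j (Finset.mem_univ j)
    have hmj : max (s j) 0 = s j := max_eq_left hsj.le
    rw [hmj] at hterm
    have : 1 - u i j = 0 := by
      rcases mul_eq_zero.mp hterm with h | h
      · exact absurd h (by linarith)
      · exact h
    linarith
  have hu_neg : ∀ (i : Fin 3) j, s j < 0 → u i j = 0 := by
    intro i j hsj
    have hzero : ∑ j, (max (s j) 0 - s j) * u i j = 0 := by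
      have : ∑ j, (max (s j) 0 - s j) * u i j
          = (∑ j, max (s j) 0 * u i j) - ∑ j, s j * u i j := by
        rw [← Finset.sum_sub_distrib]
        congr 1; ext j; ring
      rw [this, hmaxu i, hE i]; ring
    have hterm := (Finset.sum_eq_zero_iff_of_nonneg (fun j _ => by
      have h1 : s j ≤ max (s j) 0 := le_max_left _ _
      have := (hu01 i j).1
      nlinarith)).mp hzero j (Finset.mem_univ j)
    have hmj : max (s j) 0 = 0 := max_eq_right hsj.le
    rw [hmj] at hterm
    rcases mul_eq_zero.mp hterm with h | h
    · exact absurd h (by linarith)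
    · exact h
  -- the midpoint weights
  set w : Fin n → ℝ := fun j => if 0 < s j then 1 else if s j < 0 then 0 else 1/2 with hw_def
  have hw01 : ∀ j, 0 ≤ w j ∧ w j ≤ 1 := by
    intro j
    rw [hw_def]
    dsimp only
    split_ifs <;> norm_num
  have hsw : ∀ j, s j * w j = max (s j) 0 := by
    intro j
    rw [hw_def]
    dsimp only
    split_ifs with h1 h2
    · rw [max_eq_left h1.le]; ring
    · rw [max_eq_right h2.le]; ring
    · have : s j = 0 := le_antisymm (not_lt.mp h1) (not_lt.mp h2)
      rw [this]; simp
  set t : Fin 3 → Fin n → ℝ := fun i j => 2 * w j - u i j with ht_def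
  have ht01 : ∀ i j, 0 ≤ t i j ∧ t i j ≤ 1 := by
    intro i j
    rw [ht_def]
    dsimp only
    rw [hw_def]
    dsimp only
    rcases lt_trichotomy (s j) 0 with h | h | h
    · rw [if_neg (by linarith), if_pos h, hu_neg i j h]; norm_num
    · rw [if_neg (by simp [h]), if_neg (by simp [h])]
      have := (hu01 i j).1
      have := (hu01 i j).2
      constructor <;> linarith
    · rw [if_pos h, hu_pos i j h]; norm_num
  -- the point m and the reflected points
  set mm : X → ℝ := fun x => ∑ j, κ x j * w j with hmm_def
  have hmac : mm a - mm c = 1/2 := by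
    rw [hmm_def]
    dsimp only
    rw [← Finset.sum_sub_distrib]
    have : ∀ j ∈ Finset.univ, κ a j * w j - κ c j * w j = s j * w j := by
      intro j _; rw [hs_def]; ring
    rw [Finset.sum_congr rfl this]
    calc ∑ j, s j * w j = ∑ j, max (s j) 0 := Finset.sum_congr rfl fun j _ => hsw j
      _ = 1/2 := by rw [← hS_def, hSeq]
  set xx : Fin 3 → X → ℝ := fun i x => ∑ j, κ x j * t i j with hxx_def
  have hxx2m : ∀ i x, xx i x = 2 * mm x - NLUB.vv cls i x := by
    intro i x
    rw [hxx_def, hmm_def]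
    dsimp only
    rw [huv i x, ht_def]
    dsimp only
    rw [Finset.mul_sum, ← Finset.sum_sub_distrib]
    congr 1; ext j; ring
  -- representations of xx via KA and KB
  set α : Fin 3 → Fin 4 → ℝ := fun i k => ∑ j, lam k j * t i j with hα_def
  set β : Fin 3 → Fin 4 → ℝ := fun i k => ∑ j, rho k j * t i j with hβ_def
  have hα01 : ∀ i k, 0 ≤ α i k ∧ α i k ≤ 1 := by
    intro i k
    rw [hα_def]
    constructor
    · exact Finset.sum_nonneg fun j _ => mul_nonneg (hlam.1 k j) (ht01 i j).1
    · calc ∑ j, lam k j * t i j ≤ ∑ j, lam k j * 1 :=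
        Finset.sum_le_sum fun j _ =>
          mul_le_mul_of_nonneg_left (ht01 i j).2 (hlam.1 k j)
      _ = 1 := by simpa using hlam.2 k
  have hβ01 : ∀ i k, 0 ≤ β i k ∧ β i k ≤ 1 := by
    intro i k
    rw [hβ_def]
    constructor
    · exact Finset.sum_nonneg fun j _ => mul_nonneg (hrho.1 k j) (ht01 i j).1
    · calc ∑ j, rho k j * t i j ≤ ∑ j, rho k j * 1 :=
        Finset.sum_le_sum fun j _ =>
          mul_le_mul_of_nonneg_left (ht01 i j).2 (hrho.1 k j)
      _ = 1 := by simpa using hrho.2 k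
  have hxxα : ∀ i x, xx i x = ∑ k, NLUB.R3 (cls x) k * α i k := by
    intro i x
    rw [hxx_def, hα_def]
    dsimp only
    calc ∑ j, κ x j * t i j
        = ∑ j, (∑ k, NLUB.R3 (cls x) k * lam k j) * t i j := by
          refine Finset.sum_congr rfl fun j _ => ?_
          rw [hκA x j]
      _ = ∑ k, NLUB.R3 (cls x) k * ∑ j, lam k j * t i j := NLUB.sum_swap_mul _ _ _
  have hxxβ : ∀ i x, xx i x = ∑ k, NLUB.S3 (cls x) k * β i k := by
    intro i x
    rw [hxx_def, hβ_def]
    dsimp only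
    calc ∑ j, κ x j * t i j
        = ∑ j, (∑ k, NLUB.S3 (cls x) k * rho k j) * t i j := by
          refine Finset.sum_congr rfl fun j _ => ?_
          rw [hκB x j]
      _ = ∑ k, NLUB.S3 (cls x) k * ∑ j, rho k j * t i j := NLUB.sum_swap_mul _ _ _
  -- θ value of xx i is 1/2
  have hxθ : ∀ i : Fin 3, xx i a - xx i c = 1/2 := by
    intro i
    rw [hxx2m i a, hxx2m i c]
    have := hvac i
    linarith
  -- α and β boundary coordinates vanish
  have hα3 : ∀ i, α i 3 = 0 := by
    intro i
    have h1 : xx i a - xx i c = 1/2 * α i 0 - 1/2 * α i 3 := by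
      rw [hxxα i a, hxxα i c, cls_a, cls_c]
      exact NLUB.R3_theta (α i)
    have h2 := hxθ i
    have h3 := (hα01 i 0).2
    have h4 := (hα01 i 3).1
    linarith
  have hβ3 : ∀ i, β i 3 = 0 := by
    intro i
    have h1 : xx i a - xx i c = 1/2 * β i 0 - 1/2 * β i 3 := by
      rw [hxxβ i a, hxxβ i c, cls_a, cls_c]
      exact NLUB.S3_theta (β i)
    have h2 := hxθ i
    have h3 := (hβ01 i 0).2
    have h4 := (hβ01 i 3).1
    linarith
  -- inequality certificates
  have hg1 : ∀ i : Fin 3, xx i b ≤ 1/2 := by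
    intro i
    have h1 : xx i b = 1/2 * α i 1 + 1/2 * α i 3 := by
      rw [hxxα i b, cls_b]; exact NLUB.R3_b (α i)
    have := (hα01 i 1).2
    have := hα3 i
    linarith
  have hg2 : ∀ i : Fin 3, 2 * xx i c ≤ xx i b := by
    intro i
    have h1 : xx i b = 1/2 * β i 1 + 1/2 * β i 2 := by
      rw [hxxβ i b, cls_b]; exact NLUB.S3_b (β i)
    have h2 : xx i c = 1/4 * β i 2 + 3/4 * β i 3 := by
      rw [hxxβ i c, cls_c]; exact NLUB.S3_c (β i)
    have := (hβ01 i 1).1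
    have := hβ3 i
    linarith
  have hg3 : ∀ i : Fin 3, 0 ≤ xx i c := by
    intro i
    rw [hxx_def]
    exact Finset.sum_nonneg fun j _ => mul_nonneg (hκs.1 c j) (ht01 i j).1
  -- values of vv at b and c
  have hv0b : NLUB.vv cls 0 b = 0 := by
    have : NLUB.vv cls 0 b = ∑ k, NLUB.R3 1 k * NLUB.AV 0 k := by
      simp [NLUB.vv, NLUB.KA, cls_b]
    rw [this, NLUB.R3_b]
    norm_num [NLUB.AV, Matrix.vecHead, Matrix.vecTail, Matrix.cons_val_two, Matrix.cons_val_three]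
  have hv1b : NLUB.vv cls 1 b = 1/2 := by
    have : NLUB.vv cls 1 b = ∑ k, NLUB.R3 1 k * NLUB.AV 1 k := by
      simp [NLUB.vv, NLUB.KA, cls_b]
    rw [this, NLUB.R3_b]
    norm_num [NLUB.AV, Matrix.vecHead, Matrix.vecTail, Matrix.cons_val_two, Matrix.cons_val_three]
  have hv1c : NLUB.vv cls 1 c = 0 := by
    have : NLUB.vv cls 1 c = ∑ k, NLUB.R3 2 k * NLUB.AV 1 k := by
      simp [NLUB.vv, NLUB.KA, cls_c]
    rw [this, NLUB.R3_c]
    norm_num [NLUB.AV, Matrix.vecHead, Matrix.vecTail, Matrix.cons_val_two, Matrix.cons_val_three]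
  have hv2c : NLUB.vv cls 2 c = 1/4 := by
    have : NLUB.vv cls 2 c = ∑ k, NLUB.R3 2 k * NLUB.AV 2 k := by
      simp [NLUB.vv, NLUB.KA, cls_c]
    rw [this, NLUB.R3_c]
    norm_num [NLUB.AV, Matrix.vecHead, Matrix.vecTail, Matrix.cons_val_two, Matrix.cons_val_three]
  -- final contradiction
  have e0 := hxx2m 0 b  -- xx 0 b = 2 mm b - 0
  have e1b := hxx2m 1 b -- xx 1 b = 2 mm b - 1/2
  have e1c := hxx2m 1 c -- xx 1 c = 2 mm c - 0
  have e2c := hxx2m 2 c -- xx 2 c = 2 mm c - 1/4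
  have f0 := hg1 0
  have f1 := hg2 1
  have f2 := hg3 2
  rw [e0, hv0b] at f0
  rw [e1b, e1c, hv1b, hv1c] at f1
  rw [e2c, hv2c] at f2
  linarith
end
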